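/- Let T > 0 and let g, h : [0,T] × [0,T] → ℝ be continuous functions that are continuously differentiable in the first variable, with g(t,t) = 1 for all t ∈ [0,T]. For (t,r) ∈ [0,T] × ℝ define a(t,r) = ∫_t^T exp(−∫_t^u (r·g(t,s) + h(t,s)) ds) du. Then for every (t,r) ∈ (0,T) × ℝ, the partial derivative of a with respect to t exists and equals ∂a/∂t(t,r) = (r + h(t,t))·a(t,r) − 1 − H₁(t,r) − H₂(t,r), where H₁(t,r) = ∫_t^T exp(−∫_t^u (r·g(t,s)+h(t,s)) ds)·(∫_t^u r·(∂g/∂t)(t,s) ds) du and H₂(t,r) = ∫_t^T exp(−∫_t^u (r·g(t,s)+h(t,s)) ds)·(∫_t^u (∂h/∂t)(t,s) ds) du. -/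

import Mathlib

open Set intervalIntegral
open MeasureTheory Filter Metric

lemma leibniz_R (f : ℝ → ℝ → ℝ) (hf : Continuous fun p : ℝ × ℝ => f p.1 p.2) (t : ℝ) :
    HasDerivAt (fun τ => ∫ s in τ..t, (f τ s - f t s)) 0 t := by
  rw [hasDerivAt_iff_isLittleO]
  rw [Asymptotics.isLittleO_iff]
  intro c hc
  have hK : IsCompact (Icc (t-1) (t+1) ×ˢ Icc (t-1) (t+1)) :=
    (isCompact_Icc).prod isCompact_Icc
  have huc := hK.uniformContinuousOn_of_continuous (hf.continuousOn)
  rw [Metric.uniformContinuousOn_iff] at huc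
  obtain ⟨δ, hδ, hδ'⟩ := huc c hc
  rw [_root_.eventually_nhds_iff]
  refine ⟨ball t (min δ 1), ?_, isOpen_ball, mem_ball_self (lt_min hδ one_pos)⟩
  intro τ hτ
  rw [mem_ball, Real.dist_eq] at hτ
  have hτ1 : |τ - t| < 1 := lt_of_lt_of_le hτ (min_le_right _ _)
  have hτδ : |τ - t| < δ := lt_of_lt_of_le hτ (min_le_left _ _)
  have htK : t ∈ Icc (t-1) (t+1) := by constructor <;> linarith
  have hτK : τ ∈ Icc (t-1) (t+1) := by
    rw [abs_lt] at hτ1; constructor <;> linarith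
  have hsub : uIcc τ t ⊆ Icc (t-1) (t+1) := by
    rw [← uIcc_of_le (by linarith : t - 1 ≤ t + 1)]
    exact uIcc_subset_uIcc ((uIcc_of_le (by linarith : t - 1 ≤ t + 1)) ▸ hτK)
      ((uIcc_of_le (by linarith : t - 1 ≤ t + 1)) ▸ htK)
  have hbound : ∀ s ∈ Set.uIoc τ t, ‖f τ s - f t s‖ ≤ c := by
    intro s hs
    have hsK : s ∈ Icc (t-1) (t+1) := hsub (Set.Ioc_subset_Icc_self hs)
    have h1 : (τ, s) ∈ Icc (t-1) (t+1) ×ˢ Icc (t-1) (t+1) := ⟨hτK, hsK⟩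
    have h2 : (t, s) ∈ Icc (t-1) (t+1) ×ˢ Icc (t-1) (t+1) := ⟨htK, hsK⟩
    have hd : dist ((τ, s) : ℝ × ℝ) (t, s) < δ := by
      rw [Prod.dist_eq]
      simpa [Real.dist_eq] using hτδ
    have := hδ' _ h1 _ h2 hd
    rw [Real.dist_eq] at this
    exact le_of_lt this
  calc ‖(∫ s in τ..t, (f τ s - f t s)) - (∫ s in t..t, (f t s - f t s)) - (τ - t) • (0:ℝ)‖
      = ‖∫ s in τ..t, (f τ s - f t s)‖ := by simp
    _ ≤ c * |t - τ| := intervalIntegral.norm_integral_le_of_norm_le_const hbound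
    _ = c * ‖τ - t‖ := by rw [Real.norm_eq_abs, abs_sub_comm]

lemma leibniz (T : ℝ) (f ft : ℝ → ℝ → ℝ)
    (hf : Continuous fun p : ℝ × ℝ => f p.1 p.2)
    (hft : Continuous fun p : ℝ × ℝ => ft p.1 p.2)
    (hder : ∀ s : ℝ, ∀ τ ∈ Ioo (0 : ℝ) T, HasDerivAt (fun σ => f σ s) (ft τ s) τ)
    (u t : ℝ) (htI : t ∈ Ioo (0 : ℝ) T) :
    HasDerivAt (fun τ => ∫ s in τ..u, f τ s) (-(f t t) + ∫ s in t..u, ft t s) t := by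
  have hfc : ∀ τ : ℝ, Continuous (fun s => f τ s) := fun τ =>
    hf.comp (Continuous.prodMk_right τ)
  have hftc : ∀ τ : ℝ, Continuous (fun s => ft τ s) := fun τ =>
    hft.comp (Continuous.prodMk_right τ)
  -- split the integral
  have key : ∀ τ : ℝ, (∫ s in τ..u, f τ s)
      = ((∫ s in τ..t, f t s) + ∫ s in τ..t, (f τ s - f t s)) + ∫ s in t..u, f τ s := by
    intro τ
    rw [← intervalIntegral.integral_add (f := fun s => f t s) (g := fun s => f τ s - f t s) ((hfc t).intervalIntegrable _ _)
      (((hfc τ).sub (hfc t) : Continuous fun s => f τ s - f t s).intervalIntegrable _ _)]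
    simp only [add_sub_cancel]
    exact (intervalIntegral.integral_add_adjacent_intervals
      ((hfc τ).intervalIntegrable τ t) ((hfc τ).intervalIntegrable t u)).symm
  -- derivative of the Q part via dominated convergence
  obtain ⟨ε, hε, hball⟩ := Metric.isOpen_iff.1 isOpen_Ioo t htI
  have hK : IsCompact (Icc (t - ε/2) (t + ε/2) ×ˢ uIcc t u) :=
    isCompact_Icc.prod isCompact_uIcc
  obtain ⟨M, hM⟩ := hK.exists_bound_of_continuousOn hft.continuousOn
  have hQ : HasDerivAt (fun τ => ∫ s in t..u, f τ s) (∫ s in t..u, ft t s) t := by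
    have := (intervalIntegral.hasDerivAt_integral_of_dominated_loc_of_deriv_le
      (μ := MeasureTheory.volume) (F := f) (F' := ft) (x₀ := t) (a := t) (b := u) (bound := fun _ => M)
      (ball_mem_nhds t (half_pos hε))
      (Filter.Eventually.of_forall fun x => ((hfc x).aestronglyMeasurable))
      ((hfc t).intervalIntegrable _ _)
      ((hftc t).aestronglyMeasurable)
      (Filter.Eventually.of_forall ?_)
      (intervalIntegrable_const)
      (Filter.Eventually.of_forall ?_)).2
    · exact this
    · intro s hs x hx
      have hx' : x ∈ Icc (t - ε/2) (t + ε/2) := by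
        rw [Metric.mem_ball, Real.dist_eq, abs_lt] at hx
        constructor <;> linarith [hx.1, hx.2]
      exact hM (x, s) ⟨hx', Set.Ioc_subset_Icc_self hs⟩
    · intro s hs x hx
      apply hder s
      apply hball
      rw [Metric.mem_ball, Real.dist_eq] at hx ⊢
      linarith [abs_lt.1 hx]
  -- derivative of P1
  have hP1 : HasDerivAt (fun τ => ∫ s in τ..t, f t s) (-(f t t)) t := by
    have h1 : HasDerivAt (fun τ => ∫ s in t..τ, f t s) (f t t) t :=
      intervalIntegral.integral_hasDerivAt_right ((hfc t).intervalIntegrable _ _)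
        ((hfc t).stronglyMeasurableAtFilter _ _) (hfc t).continuousAt
    exact h1.neg.congr_of_eventuallyEq
      (Filter.Eventually.of_forall fun τ => intervalIntegral.integral_symm t τ)
  have hR : HasDerivAt (fun τ => ∫ s in τ..t, (f τ s - f t s)) 0 t := leibniz_R f hf t
  have := ((hP1.add hR).add hQ)
  rw [show -(f t t) + 0 + (∫ s in t..u, ft t s) = -(f t t) + ∫ s in t..u, ft t s by ring] at this
  exact this.congr_of_eventuallyEq (Filter.Eventually.of_forall fun τ => key τ)


set_option maxHeartbeats 1000000 in
/-- Leibniz rule for the annuity-form wealth-to-consumption factor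
`a(t,r) = ∫_t^T exp(−∫_t^u (r·g(t,s) + h(t,s)) ds) du`:
for `(t,r) ∈ (0,T) × ℝ`,
`∂a/∂t(t,r) = (r + h(t,t))·a(t,r) − 1 − H₁(t,r) − H₂(t,r)`, where
`H₁(t,r) = ∫_t^T exp(−∫_t^u (r·g(t,s)+h(t,s)) ds)·(∫_t^u r·∂g/∂t(t,s) ds) du` and
`H₂(t,r) = ∫_t^T exp(−∫_t^u (r·g(t,s)+h(t,s)) ds)·(∫_t^u ∂h/∂t(t,s) ds) du`. -/
theorem annuity_form_time_derivative (T : ℝ) (hT : 0 < T)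
    (g h gt ht : ℝ → ℝ → ℝ)
    (hg_cont : ContinuousOn (fun p : ℝ × ℝ => g p.1 p.2) (Icc 0 T ×ˢ Icc 0 T))
    (hh_cont : ContinuousOn (fun p : ℝ × ℝ => h p.1 p.2) (Icc 0 T ×ˢ Icc 0 T))
    (hgt_cont : ContinuousOn (fun p : ℝ × ℝ => gt p.1 p.2) (Icc 0 T ×ˢ Icc 0 T))
    (hht_cont : ContinuousOn (fun p : ℝ × ℝ => ht p.1 p.2) (Icc 0 T ×ˢ Icc 0 T))
    (hg_deriv : ∀ s ∈ Icc (0 : ℝ) T, ∀ t ∈ Ioo (0 : ℝ) T,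
      HasDerivAt (fun τ => g τ s) (gt t s) t)
    (hh_deriv : ∀ s ∈ Icc (0 : ℝ) T, ∀ t ∈ Ioo (0 : ℝ) T,
      HasDerivAt (fun τ => h τ s) (ht t s) t)
    (hg_diag : ∀ t ∈ Icc (0 : ℝ) T, g t t = 1) :
    ∀ t ∈ Ioo (0 : ℝ) T, ∀ r : ℝ,
      HasDerivAt
        (fun τ => ∫ u in τ..T, Real.exp (-∫ s in τ..u, (r * g τ s + h τ s)))
        ((r + h t t) * (∫ u in t..T, Real.exp (-∫ s in t..u, (r * g t s + h t s)))
          - 1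
          - (∫ u in t..T, Real.exp (-∫ s in t..u, (r * g t s + h t s))
              * (∫ s in t..u, r * gt t s))
          - (∫ u in t..T, Real.exp (-∫ s in t..u, (r * g t s + h t s))
              * (∫ s in t..u, ht t s))) t := by
  intro t htI r
  -- the clamping projection onto [0, T]
  set π : ℝ → ℝ := fun x => max 0 (min x T) with hπdef
  have hπ : Continuous π := continuous_const.max (continuous_id.min continuous_const)
  have hπmem : ∀ x, π x ∈ Icc (0 : ℝ) T := fun x =>
    ⟨le_max_left _ _, max_le hT.le (min_le_right _ _)⟩
  have hπid : ∀ x ∈ Icc (0 : ℝ) T, π x = x := fun x hx => by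
    simp only [hπdef]; rw [min_eq_left hx.2, max_eq_right hx.1]
  -- clamped integrands
  set fG : ℝ → ℝ → ℝ := fun τ s => r * g (π τ) (π s) + h (π τ) (π s) with hfGdef
  set ftG : ℝ → ℝ → ℝ := fun τ s => r * gt (π τ) (π s) + ht (π τ) (π s) with hftGdef
  have hπ2 : Continuous (fun p : ℝ × ℝ => (π p.1, π p.2)) :=
    (hπ.comp continuous_fst).prodMk (hπ.comp continuous_snd)
  have hπ2mem : ∀ p : ℝ × ℝ, (π p.1, π p.2) ∈ Icc (0:ℝ) T ×ˢ Icc (0:ℝ) T :=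
    fun p => ⟨hπmem _, hπmem _⟩
  have hfGc : Continuous (fun p : ℝ × ℝ => fG p.1 p.2) :=
    (continuous_const.mul (hg_cont.comp_continuous hπ2 hπ2mem)).add
      (hh_cont.comp_continuous hπ2 hπ2mem)
  have hftGc : Continuous (fun p : ℝ × ℝ => ftG p.1 p.2) :=
    (continuous_const.mul (hgt_cont.comp_continuous hπ2 hπ2mem)).add
      (hht_cont.comp_continuous hπ2 hπ2mem)
  have hfGd : ∀ s : ℝ, ∀ τ ∈ Ioo (0:ℝ) T, HasDerivAt (fun σ => fG σ s) (ftG τ s) τ := by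
    intro s τ hτ
    have hτIcc := Ioo_subset_Icc_self hτ
    have hgd : HasDerivAt (fun σ => g (π σ) (π s)) (gt (π τ) (π s)) τ := by
      rw [hπid τ hτIcc]
      refine (hg_deriv (π s) (hπmem s) τ hτ).congr_of_eventuallyEq ?_
      filter_upwards [Ioo_mem_nhds hτ.1 hτ.2] with σ hσ
      rw [hπid σ (Ioo_subset_Icc_self hσ)]
    have hhd : HasDerivAt (fun σ => h (π σ) (π s)) (ht (π τ) (π s)) τ := by
      rw [hπid τ hτIcc]
      refine (hh_deriv (π s) (hπmem s) τ hτ).congr_of_eventuallyEq ?_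
      filter_upwards [Ioo_mem_nhds hτ.1 hτ.2] with σ hσ
      rw [hπid σ (Ioo_subset_Icc_self hσ)]
    exact (hgd.const_mul r).add hhd
  -- derivative of the inner integral
  have derivI : ∀ u : ℝ, ∀ τ ∈ Ioo (0:ℝ) T,
      HasDerivAt (fun σ => ∫ s in σ..u, fG σ s)
        (-(fG τ τ) + ∫ s in τ..u, ftG τ s) τ :=
    fun u τ hτ => leibniz T fG ftG hfGc hftGc hfGd u τ hτ
  -- the exponential and its τ-derivative
  set E : ℝ → ℝ → ℝ := fun τ u => Real.exp (-∫ s in τ..u, fG τ s) with hEdef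
  set E' : ℝ → ℝ → ℝ := fun τ u =>
    Real.exp (-∫ s in τ..u, fG τ s) * (fG τ τ - ∫ s in τ..u, ftG τ s) with hE'def
  have hEd : ∀ u : ℝ, ∀ τ ∈ Ioo (0:ℝ) T, HasDerivAt (fun σ => E σ u) (E' τ u) τ := by
    intro u τ hτ
    have := ((derivI u τ hτ).neg).exp
    simp only [hEdef, hE'def]
    exact this.congr_deriv (by simp only [Pi.neg_apply]; ring)
  -- continuity of parametrized integrals
  have hparam : ∀ (F : ℝ → ℝ → ℝ), Continuous (fun p : ℝ × ℝ => F p.1 p.2) →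
      Continuous (fun p : ℝ × ℝ => ∫ s in p.1..p.2, F p.1 s) := by
    intro F hFc
    have hFu : Continuous (Function.uncurry (fun (p : ℝ × ℝ) (s : ℝ) => F p.1 s)) :=
      hFc.comp ((continuous_fst.comp continuous_fst).prodMk continuous_snd)
    have h1 : Continuous (fun p : ℝ × ℝ => ∫ s in (0:ℝ)..p.2, F p.1 s) :=
      intervalIntegral.continuous_parametric_intervalIntegral_of_continuous hFu continuous_snd
    have h2 : Continuous (fun p : ℝ × ℝ => ∫ s in (0:ℝ)..p.1, F p.1 s) :=
      intervalIntegral.continuous_parametric_intervalIntegral_of_continuous hFu continuous_fst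
    have heq : ∀ p : ℝ × ℝ, (∫ s in p.1..p.2, F p.1 s)
        = (∫ s in (0:ℝ)..p.2, F p.1 s) - ∫ s in (0:ℝ)..p.1, F p.1 s := by
      intro p
      rw [eq_sub_iff_add_eq, add_comm]
      exact intervalIntegral.integral_add_adjacent_intervals
        ((hFc.comp (Continuous.prodMk_right p.1)).intervalIntegrable _ _)
        ((hFc.comp (Continuous.prodMk_right p.1)).intervalIntegrable _ _)
    have := h1.sub h2
    exact this.congr fun p => (heq p).symm
  have hIc := hparam fG hfGc
  have hAc := hparam ftG hftGc
  have hEc : Continuous (fun p : ℝ × ℝ => E p.1 p.2) := Real.continuous_exp.comp hIc.neg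
  have hE'c : Continuous (fun p : ℝ × ℝ => E' p.1 p.2) :=
    (Real.continuous_exp.comp hIc.neg).mul
      ((hfGc.comp (continuous_fst.prodMk continuous_fst)).sub hAc)
  -- outer Leibniz rule
  have main : HasDerivAt (fun τ => ∫ u in τ..T, E τ u)
      (-(E t t) + ∫ u in t..T, E' t u) t :=
    leibniz T E E' hEc hE'c hEd T t htI
  -- conversion back to the unclamped statement
  have hIccT : t ∈ Icc (0:ℝ) T := Ioo_subset_Icc_self htI
  have hTmem : T ∈ Icc (0:ℝ) T := right_mem_Icc.2 hT.le
  have hsub : ∀ τ ∈ Icc (0:ℝ) T, ∀ u ∈ Icc (0:ℝ) T, uIcc τ u ⊆ Icc (0:ℝ) T := by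
    intro τ hτ u hu
    rw [← uIcc_of_le hT.le]
    exact uIcc_subset_uIcc (by rwa [uIcc_of_le hT.le]) (by rwa [uIcc_of_le hT.le])
  have hinner : ∀ τ ∈ Icc (0:ℝ) T, ∀ u ∈ Icc (0:ℝ) T,
      (∫ s in τ..u, fG τ s) = ∫ s in τ..u, (r * g τ s + h τ s) := by
    intro τ hτ u hu
    apply intervalIntegral.integral_congr
    intro s hs
    simp only [hfGdef]
    rw [hπid τ hτ, hπid s (hsub τ hτ u hu hs)]
  have hfun : (fun τ => ∫ u in τ..T, Real.exp (-∫ s in τ..u, (r * g τ s + h τ s)))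
      =ᶠ[nhds t] (fun τ => ∫ u in τ..T, E τ u) := by
    filter_upwards [Ioo_mem_nhds htI.1 htI.2] with τ hτ
    have hτI : τ ∈ Icc (0:ℝ) T := Ioo_subset_Icc_self hτ
    apply intervalIntegral.integral_congr
    intro u hu
    have huI : u ∈ Icc (0:ℝ) T := hsub τ hτI T hTmem hu
    simp only [hEdef]
    rw [hinner τ hτI u huI]
  have final := main.congr_of_eventuallyEq hfun
  have hEtt : E t t = 1 := by
    simp [hEdef, intervalIntegral.integral_same]
  -- continuity of the clamped integrands of one variable
  have hGtc : Continuous (fun s => r * gt (π t) (π s)) :=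
    continuous_const.mul (hgt_cont.comp_continuous
      (continuous_const.prodMk hπ) (fun s => ⟨hπmem t, hπmem s⟩))
  have hHtc : Continuous (fun s => ht (π t) (π s)) :=
    hht_cont.comp_continuous (continuous_const.prodMk hπ) (fun s => ⟨hπmem t, hπmem s⟩)
  have hptw : ∀ u ∈ uIcc t T, E' t u =
      (r + h t t) * Real.exp (-∫ s in t..u, (r * g t s + h t s))
      - Real.exp (-∫ s in t..u, (r * g t s + h t s)) * (∫ s in t..u, r * gt (π t) (π s))
      - Real.exp (-∫ s in t..u, (r * g t s + h t s)) * (∫ s in t..u, ht (π t) (π s)) := by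
    intro u hu
    have huI : u ∈ Icc (0:ℝ) T := hsub t hIccT T hTmem hu
    have h1 : (∫ s in t..u, fG t s) = ∫ s in t..u, (r * g t s + h t s) :=
      hinner t hIccT u huI
    have h2 : (∫ s in t..u, ftG t s)
        = (∫ s in t..u, r * gt (π t) (π s)) + ∫ s in t..u, ht (π t) (π s) := by
      simp only [hftGdef]
      exact intervalIntegral.integral_add (hGtc.intervalIntegrable _ _)
        (hHtc.intervalIntegrable _ _)
    have h5 : fG t t = r + h t t := by
      simp only [hfGdef]
      rw [hπid t hIccT, hg_diag t hIccT]; ring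
    simp only [hE'def]
    rw [h1, h2, h5]
    ring
  have he : Continuous (fun u => E t u) := by fun_prop
  have hA1 : Continuous (fun u => ∫ s in t..u, r * gt (π t) (π s)) :=
    intervalIntegral.continuous_primitive (fun a b => hGtc.intervalIntegrable a b) t
  have hA2 : Continuous (fun u => ∫ s in t..u, ht (π t) (π s)) :=
    intervalIntegral.continuous_primitive (fun a b => hHtc.intervalIntegrable a b) t
  -- the unclamped pieces agree with clamped ones on `uIcc t T`
  have heq1 : ∀ u ∈ uIcc t T, Real.exp (-∫ s in t..u, (r * g t s + h t s)) = E t u := by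
    intro u hu
    have huI : u ∈ Icc (0:ℝ) T := hsub t hIccT T hTmem hu
    simp only [hEdef]
    rw [hinner t hIccT u huI]
  have i0 : IntervalIntegrable (fun u => Real.exp (-∫ s in t..u, (r * g t s + h t s)))
      MeasureTheory.volume t T :=
    (he.continuousOn.congr fun u hu => heq1 u hu).intervalIntegrable
  have i1 : IntervalIntegrable (fun u => Real.exp (-∫ s in t..u, (r * g t s + h t s))
      * (∫ s in t..u, r * gt (π t) (π s))) MeasureTheory.volume t T :=
    (((he.mul hA1).continuousOn).congr (fun u hu => by
      simp only [heq1 u hu, Pi.mul_apply])).intervalIntegrable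
  have i2 : IntervalIntegrable (fun u => Real.exp (-∫ s in t..u, (r * g t s + h t s))
      * (∫ s in t..u, ht (π t) (π s))) MeasureTheory.volume t T :=
    (((he.mul hA2).continuousOn).congr (fun u hu => by
      simp only [heq1 u hu, Pi.mul_apply])).intervalIntegrable
  have hsplit : (∫ u in t..T, E' t u) =
      (r + h t t) * (∫ u in t..T, Real.exp (-∫ s in t..u, (r * g t s + h t s)))
      - (∫ u in t..T, Real.exp (-∫ s in t..u, (r * g t s + h t s))
          * (∫ s in t..u, r * gt (π t) (π s)))
      - (∫ u in t..T, Real.exp (-∫ s in t..u, (r * g t s + h t s))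
          * (∫ s in t..u, ht (π t) (π s))) := by
    rw [intervalIntegral.integral_congr (fun u hu => hptw u hu)]
    rw [intervalIntegral.integral_sub ((i0.const_mul _).sub i1) i2,
      intervalIntegral.integral_sub (i0.const_mul _) i1,
      intervalIntegral.integral_const_mul]
  -- replace the clamped inner integrals in the target by unclamped ones
  have hcongr1 : (∫ u in t..T, Real.exp (-∫ s in t..u, (r * g t s + h t s))
      * (∫ s in t..u, r * gt (π t) (π s)))
      = ∫ u in t..T, Real.exp (-∫ s in t..u, (r * g t s + h t s))
          * (∫ s in t..u, r * gt t s) := by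
    apply intervalIntegral.integral_congr
    intro u hu
    have huI : u ∈ Icc (0:ℝ) T := hsub t hIccT T hTmem hu
    have hin : (∫ s in t..u, r * gt (π t) (π s)) = ∫ s in t..u, r * gt t s := by
      apply intervalIntegral.integral_congr
      intro s hs
      show r * gt (π t) (π s) = r * gt t s
      rw [hπid t hIccT, hπid s (hsub t hIccT u huI hs)]
    simp only [hin]
  have hcongr2 : (∫ u in t..T, Real.exp (-∫ s in t..u, (r * g t s + h t s))
      * (∫ s in t..u, ht (π t) (π s)))
      = ∫ u in t..T, Real.exp (-∫ s in t..u, (r * g t s + h t s))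
          * (∫ s in t..u, ht t s) := by
    apply intervalIntegral.integral_congr
    intro u hu
    have huI : u ∈ Icc (0:ℝ) T := hsub t hIccT T hTmem hu
    have hin : (∫ s in t..u, ht (π t) (π s)) = ∫ s in t..u, ht t s := by
      apply intervalIntegral.integral_congr
      intro s hs
      show ht (π t) (π s) = ht t s
      rw [hπid t hIccT, hπid s (hsub t hIccT u huI hs)]
    simp only [hin]
  refine final.congr_deriv ?_
  rw [hEtt, hsplit, hcongr1, hcongr2]
  ring
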